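/- Let μ be a probability measure on ℝ with mean 0 and variance 1, and ε ∈ (0,1) with μ((-1-ε,-1+ε) ∪ (1-ε,1+ε)) ≥ 1-ε. Then ∫_{(-∞,-1-ε]} |t| dμ(t) + ∫_{[1+ε,∞)} |t| dμ(t) < 3ε. -/

import Mathlib

open MeasureTheory Set

theorem tail_abs_integral_lt (μ : Measure ℝ) [IsProbabilityMeasure μ]
    (hi1 : Integrable (fun x => x) μ) (hi2 : Integrable (fun x => x ^ 2) μ)
    (h1 : ∫ x, x ∂μ = 0) (h2 : ∫ x, x ^ 2 ∂μ = 1)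
    (ε : ℝ) (hε : ε ∈ Ioo (0 : ℝ) 1)
    (hconc : (μ (Ioo (-1 - ε) (-1 + ε) ∪ Ioo (1 - ε) (1 + ε))).toReal ≥ 1 - ε) :
    (∫ t in Iic (-1 - ε), |t| ∂μ) + (∫ t in Ici (1 + ε), |t| ∂μ) < 3 * ε := by
  obtain ⟨hε0, hε1⟩ := hε
  set A : Set ℝ := Iic (-1 - ε)
  set B : Set ℝ := Ici (1 + ε)
  set S : Set ℝ := Ioo (-1 - ε) (-1 + ε) ∪ Ioo (1 - ε) (1 + ε)
  have hAm : MeasurableSet A := measurableSet_Iic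
  have hBm : MeasurableSet B := measurableSet_Ici
  have hSm : MeasurableSet S :=
    (measurableSet_Ioo.union measurableSet_Ioo)
  have habs : Integrable (fun x : ℝ => |x|) μ := hi1.abs
  -- |t| ≤ t² on A and B
  have hA : (∫ t in A, |t| ∂μ) ≤ ∫ t in A, t ^ 2 ∂μ := by
    apply setIntegral_mono_on habs.integrableOn hi2.integrableOn hAm
    intro x hx
    have : x ≤ -1 - ε := hx
    have h1x : 1 ≤ |x| := by
      cases abs_cases x with
      | inl h => nlinarith [h.1, h.2]
      | inr h => nlinarith [h.1, h.2]
    nlinarith [sq_abs x, abs_nonneg x]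
  have hB : (∫ t in B, |t| ∂μ) ≤ ∫ t in B, t ^ 2 ∂μ := by
    apply setIntegral_mono_on habs.integrableOn hi2.integrableOn hBm
    intro x hx
    have : 1 + ε ≤ x := hx
    have h1x : 1 ≤ |x| := by
      cases abs_cases x with
      | inl h => nlinarith [h.1]
      | inr h => nlinarith [h.1]
    nlinarith [sq_abs x, abs_nonneg x]
  have hdAB : Disjoint A B := by
    rw [Set.disjoint_left]
    intro x hxA hxB
    simp only [A, B, mem_Iic, mem_Ici] at hxA hxB
    linarith
  have hdABS : Disjoint (A ∪ B) S := by
    rw [Set.disjoint_left]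
    rintro x (hx | hx) hxS <;>
      simp only [A, B, S, mem_Iic, mem_Ici, mem_union, mem_Ioo] at hx hxS <;>
      rcases hxS with ⟨h1', h2'⟩ | ⟨h1', h2'⟩ <;> linarith
  have hunion : (∫ t in A, t ^ 2 ∂μ) + (∫ t in B, t ^ 2 ∂μ)
      = ∫ t in A ∪ B, t ^ 2 ∂μ :=
    (setIntegral_union hdAB hBm hi2.integrableOn hi2.integrableOn).symm
  have hunion2 : (∫ t in A ∪ B, t ^ 2 ∂μ) + (∫ t in S, t ^ 2 ∂μ)
      = ∫ t in (A ∪ B) ∪ S, t ^ 2 ∂μ :=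
    (setIntegral_union hdABS hSm hi2.integrableOn hi2.integrableOn).symm
  have htot : (∫ t in (A ∪ B) ∪ S, t ^ 2 ∂μ) ≤ 1 := by
    rw [← h2]
    exact setIntegral_le_integral hi2 (Filter.Eventually.of_forall fun x => sq_nonneg x)
  -- lower bound on ∫_S t²
  have hμS : μ S ≠ ⊤ := measure_ne_top μ S
  have hSlow : (1 - ε) ^ 2 * (μ S).toReal ≤ ∫ t in S, t ^ 2 ∂μ := by
    apply setIntegral_ge_of_const_le_real hSm hμS
    · rintro x (⟨hx1, hx2⟩ | ⟨hx1, hx2⟩) <;> nlinarith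
    · exact hi2.integrableOn
  have hS1 : (1 - ε) ^ 3 ≤ ∫ t in S, t ^ 2 ∂μ := by
    have h2' : (1 - ε) ^ 2 * (1 - ε) ≤ (1 - ε) ^ 2 * (μ S).toReal := by
      apply mul_le_mul_of_nonneg_left hconc (sq_nonneg _)
    nlinarith
  nlinarith [hA, hB, hunion, hunion2, htot, hS1,
    mul_pos (mul_pos hε0 hε0) (show (0:ℝ) < 3 - ε by linarith)]
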